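/- For every connected graph G of order n with diameter D, the remoteness satisfies ρ(G) ≥ nD/(2(n-1)). -/

import Mathlib

open SimpleGraph Finset

/-- The transmission of a vertex: the sum of distances from `v` to all other vertices. -/
noncomputable def transmission {n : ℕ} (G : SimpleGraph (Fin n)) (v : Fin n) : ℕ :=
  ∑ u, G.dist v u

/-- The proximity: the minimum average distance from a vertex to all others. -/
noncomputable def proximity {n : ℕ} (G : SimpleGraph (Fin n)) : ℝ :=
  sInf {x : ℝ | ∃ v : Fin n, x = transmission G v} / (n - 1)

/-- The remoteness: the maximum average distance from a vertex to all others. -/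
noncomputable def remoteness {n : ℕ} (G : SimpleGraph (Fin n)) : ℝ :=
  sSup {x : ℝ | ∃ v : Fin n, x = transmission G v} / (n - 1)

/-- The diameter of a graph: the maximum distance between two vertices. -/
noncomputable def graphDiam {n : ℕ} (G : SimpleGraph (Fin n)) : ℕ :=
  Finset.univ.sup fun p : Fin n × Fin n => G.dist p.1 p.2

theorem remoteness_ge_nD {n : ℕ} (G : SimpleGraph (Fin n)) (hG : G.Connected) :
    (n : ℝ) * graphDiam G / (2 * (n - 1)) ≤ remoteness G := by
  have hne : Nonempty (Fin n) := hG.nonempty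
  have hn : 0 < n := Fin.pos hne.some
  have hSet : {x : ℝ | ∃ v : Fin n, x = transmission G v} =
      Set.range (fun v : Fin n => ((transmission G v : ℕ) : ℝ)) := by
    ext x; simp [eq_comm]
  have hbdd : BddAbove {x : ℝ | ∃ v : Fin n, x = transmission G v} := by
    rw [hSet]; exact (Set.finite_range _).bddAbove
  rcases eq_or_lt_of_le (show 1 ≤ n from hn) with h1 | h2
  · -- n = 1 : both sides are 0 (denominators zero)
    have hz : ((n : ℝ) - 1) = 0 := by rw [← h1]; norm_num
    unfold remoteness
    rw [hz]
    simp only [mul_zero, div_zero, le_refl]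
  · -- n ≥ 2
    have hn1 : (0 : ℝ) < (n : ℝ) - 1 := by
      have : (2 : ℝ) ≤ (n : ℝ) := by exact_mod_cast h2
      linarith
    -- max transmission
    set m : ℕ := Finset.univ.sup (fun v : Fin n => transmission G v) with hm
    -- diameter is achieved
    obtain ⟨p, -, hp⟩ := Finset.exists_mem_eq_sup (Finset.univ : Finset (Fin n × Fin n))
      (Finset.univ_nonempty) (fun p : Fin n × Fin n => G.dist p.1 p.2)
    have hD : graphDiam G = G.dist p.1 p.2 := hp
    -- key inequality : n * D ≤ 2 * m
    have key : n * graphDiam G ≤ 2 * m := by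
      have h1 : ∀ w : Fin n, graphDiam G ≤ G.dist p.1 w + G.dist p.2 w := by
        intro w
        rw [hD, SimpleGraph.dist_comm (u := p.2)]
        exact hG.dist_triangle
      have h2 : n * graphDiam G ≤ transmission G p.1 + transmission G p.2 := by
        calc n * graphDiam G = ∑ _w : Fin n, graphDiam G := by
              simp [Finset.sum_const, Finset.card_univ, mul_comm]
          _ ≤ ∑ w : Fin n, (G.dist p.1 w + G.dist p.2 w) :=
              Finset.sum_le_sum (fun w _ => h1 w)
          _ = transmission G p.1 + transmission G p.2 := by
              rw [Finset.sum_add_distrib]; rfl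
      have h3 : transmission G p.1 ≤ m := Finset.le_sup (Finset.mem_univ p.1)
      have h4 : transmission G p.2 ≤ m := Finset.le_sup (Finset.mem_univ p.2)
      omega
    -- m/(n-1) ≤ remoteness
    have hmem : (m : ℝ) ∈ {x : ℝ | ∃ v : Fin n, x = transmission G v} := by
      obtain ⟨v, -, hv⟩ := Finset.exists_mem_eq_sup (Finset.univ : Finset (Fin n))
        Finset.univ_nonempty (fun v : Fin n => transmission G v)
      exact ⟨v, by rw [hm, hv]⟩
    have hle : (m : ℝ) ≤ sSup {x : ℝ | ∃ v : Fin n, x = transmission G v} :=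
      le_csSup hbdd hmem
    have keyR : (n : ℝ) * graphDiam G ≤ 2 * m := by exact_mod_cast key
    unfold remoteness
    rw [div_le_div_iff₀ (by positivity) hn1]
    calc (n : ℝ) * graphDiam G * ((n:ℝ) - 1) ≤ 2 * m * ((n:ℝ) - 1) := by nlinarith
      _ ≤ sSup {x : ℝ | ∃ v : Fin n, x = transmission G v} * (2 * ((n:ℝ) - 1)) := by
          nlinarith
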